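/- Let G be an n-vertex graph with minimum degree at least (k/(k+1) + ε)n, where k ≥ 1 is an integer and ε > 0. Then for every j with 1 ≤ j ≤ k and every set J of j vertices of G, the induced subgraph G[N(J)] on the joint neighborhood N(J) has minimum degree at least ((k−j)/(k−j+1) + ε)·|N(J)|. -/

import Mathlib

open Finset

lemma key_ineq (K Jr nn D N M ε : ℝ) (hJ1 : 1 ≤ Jr) (hJK : Jr ≤ K) (hε : 0 < ε)
    (hn : 0 < nn) (hD : (K / (K + 1) + ε) * nn ≤ D) (hDn : D ≤ nn)
    (hN : nn - Jr * (nn - D) ≤ N) (hM : N - (nn - D) ≤ M) :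
    ((K - Jr) / (K - Jr + 1) + ε) * N ≤ M := by
  have hK1 : (0:ℝ) < K + 1 := by linarith
  have hKJ1 : (0:ℝ) < K - Jr + 1 := by linarith
  set a := 1 / (K + 1) with ha
  set b := 1 / (K - Jr + 1) with hb
  have haK : a * (K + 1) = 1 := by
    rw [ha, one_div, inv_mul_cancel₀ hK1.ne']
  have hbK : b * (K - Jr + 1) = 1 := by
    rw [hb, one_div, inv_mul_cancel₀ hKJ1.ne']
  have hKa : K / (K + 1) = 1 - a := by
    rw [ha, eq_sub_iff_add_eq, ← add_div, div_self hK1.ne']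
  have hKb : (K - Jr) / (K - Jr + 1) = 1 - b := by
    rw [hb, eq_sub_iff_add_eq, ← add_div, div_self hKJ1.ne']
  have hapos : 0 < a := by rw [ha]; positivity
  have hbpos : 0 < b := by rw [hb]; positivity
  have hab : a ≤ b := by
    rw [ha, hb]
    exact one_div_le_one_div_of_le hKJ1 (by linarith)
  have hεa : ε ≤ a := by
    have h1 : (1 - a + ε) * nn ≤ nn := by rw [← hKa]; linarith
    nlinarith
  have hba : b * (1 - Jr * a) = a := by
    have h1 : 1 - Jr * a = (K + 1 - Jr) * a := by linear_combination -haK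
    rw [h1]; linear_combination a * hbK
  have hnD : nn - D ≤ (a - ε) * nn := by rw [hKa] at hD; nlinarith
  have hnD0 : 0 ≤ nn - D := by linarith
  have hJr0 : (0:ℝ) ≤ Jr := by linarith
  have hNlb : (1 - Jr * (a - ε)) * nn ≤ N := by
    nlinarith [mul_le_mul_of_nonneg_left hnD hJr0]
  have hbε : 0 ≤ b - ε := by linarith
  have hstep : (b - ε) * ((1 - Jr * (a - ε)) * nn) ≤ (b - ε) * N :=
    mul_le_mul_of_nonneg_left hNlb hbε
  have hcoef : a - ε ≤ (b - ε) * (1 - Jr * (a - ε)) := by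
    have hkey : (b - ε) * (1 - Jr * (a - ε)) - (a - ε) = ε * Jr * (a + b - ε) := by
      linear_combination hba
    nlinarith [mul_nonneg (mul_nonneg hε.le hJr0) (by linarith : (0:ℝ) ≤ a + b - ε)]
  have hmain : (a - ε) * nn ≤ (b - ε) * ((1 - Jr * (a - ε)) * nn) := by
    nlinarith [mul_le_mul_of_nonneg_right hcoef hn.le]
  have hfinal : nn - D ≤ (b - ε) * N := by linarith
  rw [hKb]
  linarith

theorem stmt1 {n k : ℕ} (hk : 1 ≤ k) (ε : ℝ) (hε : 0 < ε)
    (G : SimpleGraph (Fin n)) [DecidableRel G.Adj]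
    (hδ : ((k : ℝ) / (k + 1) + ε) * n ≤ G.minDegree)
    (j : ℕ) (hj1 : 1 ≤ j) (hj2 : j ≤ k)
    (J : Finset (Fin n)) (hJ : J.card = j) :
    ∀ v ∈ univ.filter fun v => ∀ u ∈ J, G.Adj u v,
      (((k : ℝ) - j) / ((k : ℝ) - j + 1) + ε) *
          ((univ.filter fun v => ∀ u ∈ J, G.Adj u v).card : ℝ) ≤
        ((univ.filter fun w => (∀ u ∈ J, G.Adj u w) ∧ G.Adj v w).card : ℝ) := by
  intro v hv
  rcases Nat.eq_zero_or_pos n with hn0 | hn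
  · subst hn0; exact v.elim0
  set N : Finset (Fin n) := univ.filter fun v => ∀ u ∈ J, G.Adj u v with hNdef
  set M : Finset (Fin n) := univ.filter fun w => (∀ u ∈ J, G.Adj u w) ∧ G.Adj v w with hMdef
  set d : ℕ := G.minDegree with hd
  have hdeg_le : ∀ w : Fin n, G.degree w ≤ n := by
    intro w
    calc G.degree w = (G.neighborFinset w).card := rfl
    _ ≤ (univ : Finset (Fin n)).card := card_le_card (subset_univ _)
    _ = n := by simp
  have hddeg : ∀ w : Fin n, d ≤ G.degree w := fun w => G.minDegree_le_degree w
  have hdn : d ≤ n := le_trans (hddeg v) (hdeg_le v)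
  -- |N| bound
  have hsub : univ \ N ⊆ J.biUnion fun u => univ \ G.neighborFinset u := by
    intro w hw
    simp only [hNdef, mem_sdiff, mem_filter, mem_univ, true_and, not_forall] at hw
    obtain ⟨u, hu, hadj⟩ := hw
    simp only [mem_biUnion, mem_sdiff, mem_univ, true_and, SimpleGraph.mem_neighborFinset]
    exact ⟨u, hu, hadj⟩
  have hcompl : (univ \ N).card ≤ j * (n - d) := by
    calc (univ \ N).card ≤ ∑ u ∈ J, (univ \ G.neighborFinset u).card :=
          le_trans (card_le_card hsub) (card_biUnion_le)
      _ ≤ ∑ u ∈ J, (n - d) := by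
          apply sum_le_sum
          intro u _
          rw [card_sdiff_of_subset (subset_univ _), card_univ, Fintype.card_fin]
          exact Nat.sub_le_sub_left (hddeg u) n
      _ = j * (n - d) := by rw [sum_const, hJ, smul_eq_mul]
  have hNcard : (n : ℝ) - (j : ℝ) * ((n : ℝ) - (d : ℝ)) ≤ (N.card : ℝ) := by
    have h1 : (univ \ N).card = n - N.card := by
      rw [card_sdiff_of_subset (subset_univ _), card_univ, Fintype.card_fin]
    have h2 : N.card ≤ n := by
      calc N.card ≤ (univ : Finset (Fin n)).card := card_le_card (subset_univ _)
        _ = n := by simp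
    have h3 : ((n - N.card : ℕ) : ℝ) ≤ ((j * (n - d) : ℕ) : ℝ) := by
      exact_mod_cast h1 ▸ hcompl
    rw [Nat.cast_sub h2, Nat.cast_mul, Nat.cast_sub hdn] at h3
    linarith
  -- |M| bound
  have hMeq : M = N ∩ G.neighborFinset v := by
    ext w
    simp only [hMdef, hNdef, mem_filter, mem_univ, true_and, mem_inter,
      SimpleGraph.mem_neighborFinset]
  have hMcard : (N.card : ℝ) - ((n : ℝ) - (d : ℝ)) ≤ (M.card : ℝ) := by
    have h1 : N.card ≤ M.card + (N \ G.neighborFinset v).card := by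
      rw [hMeq, card_inter_add_card_sdiff]
    have h2 : (N \ G.neighborFinset v).card ≤ n - d := by
      calc (N \ G.neighborFinset v).card ≤ (univ \ G.neighborFinset v).card :=
            card_le_card (sdiff_subset_sdiff (subset_univ _) (le_refl _))
        _ = n - G.degree v := by
            rw [card_sdiff_of_subset (subset_univ _), card_univ, Fintype.card_fin]; rfl
        _ ≤ n - d := Nat.sub_le_sub_left (hddeg v) n
    have h3 : (N.card : ℝ) ≤ (M.card : ℝ) + ((n : ℝ) - (d : ℝ)) := by
      have := Nat.cast_le (α := ℝ).mpr (le_trans h1 (Nat.add_le_add_left h2 _))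
      push_cast [Nat.cast_sub hdn] at this
      linarith
    linarith
  exact key_ineq k j n d N.card M.card ε (by exact_mod_cast hj1) (by exact_mod_cast hj2)
    hε (by exact_mod_cast hn) hδ (by exact_mod_cast hdn) hNcard hMcard
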